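/- Let ρ = log(|w|²+δ²) with |w|²+δ² < e^{-e}, η = -ρ + log(-ρ), ψ = -log η. Then the inequality ∂∂̄ψ ≥ (1 + η/(-ρ+1)²) ∂ψ ∧ ∂̄ψ holds pointwise (as an inequality of hermitian (1,1)-forms on ℂ). -/

import Mathlib

/-- The Wirtinger derivative `∂f/∂w = (f_x - i f_y)/2` of a real-valued function on `ℂ`. -/
noncomputable def wirtingerDeriv (f : ℂ → ℝ) (w : ℂ) : ℂ :=
  (1/2 : ℂ) * (((fderiv ℝ f w 1 : ℝ) : ℂ) - Complex.I * ((fderiv ℝ f w Complex.I : ℝ) : ℂ))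

/-- The coefficient of the complex Hessian `∂∂̄f`, namely `∂²f/∂w∂w̄ = (f_xx + f_yy)/4`. -/
noncomputable def ddbarCoeff (f : ℂ → ℝ) (w : ℂ) : ℝ :=
  (1/4) * ((iteratedFDeriv ℝ 2 f w) ![1, 1] + (iteratedFDeriv ℝ 2 f w) ![Complex.I, Complex.I])

noncomputable def rhoF (δ : ℝ) (w : ℂ) : ℝ := Real.log (Complex.normSq w + δ^2)
noncomputable def etaF (δ : ℝ) (w : ℂ) : ℝ := -(rhoF δ w) + Real.log (-(rhoF δ w))
noncomputable def psiF (δ : ℝ) (w : ℂ) : ℝ := -Real.log (etaF δ w)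

noncomputable def gAux : ℝ → ℝ := fun t => -Real.log (-Real.log t + Real.log (-Real.log t))
noncomputable def g1Aux : ℝ → ℝ := fun t =>
  (t⁻¹ - (t * Real.log t)⁻¹) / (-Real.log t + Real.log (-Real.log t))
noncomputable def g2Aux : ℝ → ℝ := fun t =>
  (-(t^2)⁻¹ + (Real.log t + 1) / (t^2 * (Real.log t)^2)) / (-Real.log t + Real.log (-Real.log t))
  + ((t⁻¹ - (t * Real.log t)⁻¹) / (-Real.log t + Real.log (-Real.log t)))^2

lemma normSq_aux (a b : ℝ) :
    Complex.normSq ((1/2 : ℂ) * ((a:ℂ) - Complex.I * (b:ℂ))) = (a^2+b^2)/4 := by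
  rw [Complex.normSq_mul]
  simp [Complex.normSq_apply, Complex.div_re, Complex.div_im]
  ring

lemma basic_facts {t : ℝ} (ht : 0 < t) (ht' : t < Real.exp (-Real.exp 1)) :
    Real.log t < -1 ∧ 0 < -Real.log t + Real.log (-Real.log t) := by
  have h1 : Real.log t < -Real.exp 1 := by
    have := Real.log_lt_log ht ht'
    rwa [Real.log_exp] at this
  have he : (1:ℝ) < Real.exp 1 := by
    have := Real.exp_one_gt_d9; linarith
  have hr1 : Real.log t < -1 := by linarith
  refine ⟨hr1, ?_⟩
  have : 0 < Real.log (-Real.log t) := Real.log_pos (by linarith)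
  linarith

lemma hasDerivAt_gAux {t : ℝ} (ht : 0 < t) (ht' : t < Real.exp (-Real.exp 1)) :
    HasDerivAt gAux (g1Aux t) t := by
  obtain ⟨hr1, hη⟩ := basic_facts ht ht'
  have hrne : Real.log t ≠ 0 := by linarith
  have hmne : -Real.log t ≠ 0 := by linarith
  have hηne : -Real.log t + Real.log (-Real.log t) ≠ 0 := ne_of_gt hη
  have htne : t ≠ 0 := ht.ne'
  have hl : HasDerivAt Real.log t⁻¹ t := Real.hasDerivAt_log htne
  have hh : HasDerivAt (fun s => -Real.log s + Real.log (-Real.log s))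
      (-t⁻¹ + -t⁻¹ / -Real.log t) t := hl.neg.add ((hl.neg).log hmne)
  have h2 := (hh.log hηne).neg
  refine h2.congr_deriv ?_
  unfold g1Aux
  set η := -Real.log t + Real.log (-Real.log t) with hηdef
  field_simp
  ring

lemma hasDerivAt_g1Aux {t : ℝ} (ht : 0 < t) (ht' : t < Real.exp (-Real.exp 1)) :
    HasDerivAt g1Aux (g2Aux t) t := by
  obtain ⟨hr1, hη⟩ := basic_facts ht ht'
  have hrne : Real.log t ≠ 0 := by linarith
  have hmne : -Real.log t ≠ 0 := by linarith
  have hηne : -Real.log t + Real.log (-Real.log t) ≠ 0 := ne_of_gt hη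
  have htne : t ≠ 0 := ht.ne'
  have hl : HasDerivAt Real.log t⁻¹ t := Real.hasDerivAt_log htne
  have hh : HasDerivAt (fun s => -Real.log s + Real.log (-Real.log s))
      (-t⁻¹ + -t⁻¹ / -Real.log t) t := hl.neg.add ((hl.neg).log hmne)
  have hinv : HasDerivAt (fun s : ℝ => s⁻¹) (-(t^2)⁻¹) t := hasDerivAt_inv htne
  have htl : HasDerivAt (fun s : ℝ => s * Real.log s) (1 * Real.log t + t * t⁻¹) t :=
    (hasDerivAt_id t).mul hl
  have htli := htl.inv (mul_ne_zero htne hrne)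
  have hnum := hinv.sub htli
  have hdiv := hnum.div hh hηne
  refine hdiv.congr_deriv ?_
  simp only [Pi.sub_apply, Pi.inv_apply]
  unfold g2Aux
  set η := -Real.log t + Real.log (-Real.log t) with hηdef
  field_simp
  ring

noncomputable def Dmap : ℂ →L[ℝ] ℂ →L[ℝ] ℝ :=
  (2:ℝ) • (Complex.reCLM.smulRight Complex.reCLM + Complex.imCLM.smulRight Complex.imCLM)

lemma Dmap_apply (z v : ℂ) : Dmap z v = 2 * (z.re * v.re + z.im * v.im) := by
  simp [Dmap]
  ring

lemma hasFDerivAt_u (δ : ℝ) (z : ℂ) :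
    HasFDerivAt (fun z : ℂ => Complex.normSq z + δ^2) (Dmap z) z := by
  have hre : HasFDerivAt (fun z : ℂ => z.re) Complex.reCLM z := Complex.reCLM.hasFDerivAt
  have him : HasFDerivAt (fun z : ℂ => z.im) Complex.imCLM z := Complex.imCLM.hasFDerivAt
  have h : HasFDerivAt (fun z : ℂ => z.re * z.re + z.im * z.im + δ^2)
      ((z.re • Complex.reCLM + z.re • Complex.reCLM) +
       (z.im • Complex.imCLM + z.im • Complex.imCLM)) z :=
    ((hre.mul hre).add (him.mul him)).add_const _
  have hfun : (fun z : ℂ => Complex.normSq z + δ^2)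
      = fun z : ℂ => z.re * z.re + z.im * z.im + δ^2 := by
    funext z; rw [Complex.normSq_apply]
  rw [hfun]
  convert h using 1
  ext v
  simp [Dmap_apply]
  ring


set_option maxHeartbeats 1600000 in
/-- The pointwise inequality `∂∂̄ψ ≥ (1 + η/(-ρ+1)²) ∂ψ ∧ ∂̄ψ` of hermitian (1,1)-forms
on ℂ, expressed through their scalar coefficients. -/
theorem stmt7 (δ : ℝ) (hδ : 0 < δ) (w : ℂ)
    (hw : Complex.normSq w + δ^2 < Real.exp (-Real.exp 1)) :
    (1 + etaF δ w / (-(rhoF δ w) + 1)^2) * Complex.normSq (wirtingerDeriv (psiF δ) w)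
      ≤ ddbarCoeff (psiF δ) w := by
  have ht0 : 0 < Complex.normSq w + δ^2 :=
    add_pos_of_nonneg_of_pos (Complex.normSq_nonneg w) (by positivity)
  obtain ⟨hr1, hη⟩ := basic_facts ht0 hw
  set t := Complex.normSq w + δ^2 with htdef
  -- the open set where everything is smooth
  have hUopen : IsOpen {z : ℂ | Complex.normSq z + δ^2 < Real.exp (-Real.exp 1)} :=
    isOpen_lt (by continuity) continuous_const
  have hmem : {z : ℂ | Complex.normSq z + δ^2 < Real.exp (-Real.exp 1)} ∈ nhds w :=
    hUopen.mem_nhds hw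
  have hpsi : psiF δ = fun z => gAux (Complex.normSq z + δ^2) := by
    funext z; simp [psiF, etaF, rhoF, gAux]
  have hA : ∀ z ∈ {z : ℂ | Complex.normSq z + δ^2 < Real.exp (-Real.exp 1)},
      HasFDerivAt (psiF δ) (g1Aux (Complex.normSq z + δ^2) • Dmap z) z := by
    intro z hz
    have h0 : 0 < Complex.normSq z + δ^2 :=
      add_pos_of_nonneg_of_pos (Complex.normSq_nonneg z) (by positivity)
    have := (hasDerivAt_gAux h0 hz).comp_hasFDerivAt z (hasFDerivAt_u δ z)
    rw [hpsi]; exact this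
  have hFd : ∀ z ∈ {z : ℂ | Complex.normSq z + δ^2 < Real.exp (-Real.exp 1)},
      fderiv ℝ (psiF δ) z = g1Aux (Complex.normSq z + δ^2) • Dmap z :=
    fun z hz => (hA z hz).fderiv
  have hev : fderiv ℝ (psiF δ) =ᶠ[nhds w]
      (fun z => g1Aux (Complex.normSq z + δ^2) • Dmap z) :=
    Filter.eventually_of_mem hmem hFd
  have hB : HasFDerivAt (fun z => g1Aux (Complex.normSq z + δ^2) • Dmap z)
      (g1Aux t • Dmap + (g2Aux t • Dmap w).smulRight (Dmap w)) w := by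
    have hc : HasFDerivAt (fun z : ℂ => g1Aux (Complex.normSq z + δ^2))
        (g2Aux t • Dmap w) w :=
      by have := (hasDerivAt_g1Aux ht0 hw).comp_hasFDerivAt w (hasFDerivAt_u δ w); exact this
    have hf : HasFDerivAt (fun z : ℂ => Dmap z) Dmap w := Dmap.hasFDerivAt
    exact hc.smul hf
  have hsnd : fderiv ℝ (fderiv ℝ (psiF δ)) w
      = g1Aux t • Dmap + (g2Aux t • Dmap w).smulRight (Dmap w) := by
    rw [Filter.EventuallyEq.fderiv_eq hev]
    exact hB.fderiv
  have h11 : iteratedFDeriv ℝ 2 (psiF δ) w ![1,1]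
      = g1Aux t * 2 + g2Aux t * (2*w.re) * (2*w.re) := by
    rw [iteratedFDeriv_two_apply, hsnd]
    simp [Dmap_apply]
  have hII : iteratedFDeriv ℝ 2 (psiF δ) w ![Complex.I,Complex.I]
      = g1Aux t * 2 + g2Aux t * (2*w.im) * (2*w.im) := by
    rw [iteratedFDeriv_two_apply, hsnd]
    simp [Dmap_apply]
  have hdd : ddbarCoeff (psiF δ) w = g2Aux t * Complex.normSq w + g1Aux t := by
    rw [ddbarCoeff, h11, hII, Complex.normSq_apply]; ring
  have hfw : fderiv ℝ (psiF δ) w = g1Aux t • Dmap w := hFd w hw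
  have hw1 : (fderiv ℝ (psiF δ) w 1 : ℝ) = g1Aux t * (2 * w.re) := by
    rw [hfw]; simp [Dmap_apply]
  have hwI : (fderiv ℝ (psiF δ) w Complex.I : ℝ) = g1Aux t * (2 * w.im) := by
    rw [hfw]; simp [Dmap_apply]
  have hwd : Complex.normSq (wirtingerDeriv (psiF δ) w)
      = (g1Aux t)^2 * Complex.normSq w := by
    rw [wirtingerDeriv, hw1, hwI, normSq_aux, Complex.normSq_apply]
    ring
  have hrho : rhoF δ w = Real.log t := by rw [rhoF]
  have heta : etaF δ w = -Real.log t + Real.log (-Real.log t) := by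
    rw [etaF, hrho]
  rw [hdd, hwd, hrho, heta]
  -- now a purely real inequality
  have hn : Complex.normSq w = t - δ^2 := by rw [htdef]; ring
  rw [hn]
  set r := Real.log t with hrdef
  set η := -r + Real.log (-r) with hηdef
  have hrne : r ≠ 0 := by linarith
  have htne : t ≠ 0 := ht0.ne'
  have hηne : η ≠ 0 := ne_of_gt hη
  have h1rne : -r + 1 ≠ 0 := by linarith
  have key : g2Aux t * (t - δ^2) + g1Aux t
      - (1 + η / (-r + 1)^2) * ((g1Aux t)^2 * (t - δ^2))
      = ((1 - r⁻¹) * δ^2) / (η * t^2) := by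
    unfold g1Aux g2Aux
    rw [← hrdef, ← hηdef]
    field_simp
    ring
  have hpos : 0 ≤ ((1 - r⁻¹) * δ^2) / (η * t^2) := by
    have h1 : (0:ℝ) < 1 - r⁻¹ := by
      have : r⁻¹ < 0 := inv_lt_zero.mpr (show r < 0 by linarith)
      linarith
    have h2 : (0:ℝ) < η * t^2 := by positivity
    positivity
  linarith [key, hpos]
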